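/- Let α ≥ 0, ν > 0, and on Ω = (0,1)² define w(x,y,t) = e^{−2π²νt}(−cos(πx)sin(πy), sin(πx)cos(πy)), u = (1 + 2π²α²)w, and p = −w·∇w interpreted via ∇p = −(w·∇)w (equivalently p = −(1/2)|w|² up to a constant, using that w·∇w is a gradient). Then (u, p, w) solves the EMAC-Reg system: u_t + (w·∇)w + ∇p − νΔu = 0, −α²Δw + w = u, and div w = 0. -/

import Mathlib

open Real

/-- `(∇u)_{ij} = ∂_j u_i` : entry of the Jacobian of a vector field. -/
noncomputable def gradEntry {d : ℕ} (u : (Fin d → ℝ) → Fin d → ℝ) (i j : Fin d)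
    (x : Fin d → ℝ) : ℝ := fderiv ℝ (fun y => u y i) x (Pi.single j 1)

/-- divergence of a vector field. -/
noncomputable def divg {d : ℕ} (u : (Fin d → ℝ) → Fin d → ℝ) (x : Fin d → ℝ) : ℝ :=
  ∑ j, gradEntry u j j x

/-- Laplacian of a scalar function. -/
noncomputable def lap {d : ℕ} (f : (Fin d → ℝ) → ℝ) (x : Fin d → ℝ) : ℝ :=
  ∑ j, fderiv ℝ (fun y => fderiv ℝ f y (Pi.single j 1)) x (Pi.single j 1)

/-- The time-dependent Taylor–Green field `w`. -/
noncomputable def wTG (ν t : ℝ) (x : Fin 2 → ℝ) : Fin 2 → ℝ :=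
  fun i => Real.exp (-2 * π^2 * ν * t) *
    (![-(Real.cos (π * x 0)) * Real.sin (π * x 1),
       Real.sin (π * x 0) * Real.cos (π * x 1)] i)

/-- `u = (1 + 2π²α²)w`. -/
noncomputable def uTG (α ν t : ℝ) (x : Fin 2 → ℝ) : Fin 2 → ℝ :=
  fun i => (1 + 2 * π^2 * α^2) * wTG ν t x i

section Helpers
open ContinuousLinearMap

lemma hasFDerivAt_sep (f g f' g' : ℝ → ℝ)
    (hf : ∀ s, HasDerivAt f (f' s) s) (hg : ∀ s, HasDerivAt g (g' s) s)
    (x : Fin 2 → ℝ) :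
    HasFDerivAt (fun y : Fin 2 → ℝ => f (y 0) * g (y 1))
      ((f' (x 0) * g (x 1)) • (proj 0 : (Fin 2 → ℝ) →L[ℝ] ℝ)
        + (f (x 0) * g' (x 1)) • (proj 1 : (Fin 2 → ℝ) →L[ℝ] ℝ)) x := by
  have h0 : HasFDerivAt (fun y : Fin 2 → ℝ => f (y 0))
      ((f' (x 0)) • (proj 0 : (Fin 2 → ℝ) →L[ℝ] ℝ)) x := by
    have := (hf (x 0)).hasFDerivAt.comp x
      ((proj 0 : (Fin 2 → ℝ) →L[ℝ] ℝ).hasFDerivAt (x := x))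
    refine this.congr_fderiv ?_
    ext y
    simp [mul_comm]
  have h1 : HasFDerivAt (fun y : Fin 2 → ℝ => g (y 1))
      ((g' (x 1)) • (proj 1 : (Fin 2 → ℝ) →L[ℝ] ℝ)) x := by
    have := (hg (x 1)).hasFDerivAt.comp x
      ((proj 1 : (Fin 2 → ℝ) →L[ℝ] ℝ).hasFDerivAt (x := x))
    refine this.congr_fderiv ?_
    ext y
    simp [mul_comm]
  have := h0.mul h1
  refine this.congr_fderiv ?_
  ext y
  simp
  ring

lemma sep_fd0 (f g f' g' : ℝ → ℝ)
    (hf : ∀ s, HasDerivAt f (f' s) s) (hg : ∀ s, HasDerivAt g (g' s) s)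
    (x : Fin 2 → ℝ) :
    fderiv ℝ (fun y : Fin 2 → ℝ => f (y 0) * g (y 1)) x (Pi.single 0 1)
      = f' (x 0) * g (x 1) := by
  rw [(hasFDerivAt_sep f g f' g' hf hg x).fderiv]
  simp [Pi.single_apply]

lemma sep_fd1 (f g f' g' : ℝ → ℝ)
    (hf : ∀ s, HasDerivAt f (f' s) s) (hg : ∀ s, HasDerivAt g (g' s) s)
    (x : Fin 2 → ℝ) :
    fderiv ℝ (fun y : Fin 2 → ℝ => f (y 0) * g (y 1)) x (Pi.single 1 1)
      = f (x 0) * g' (x 1) := by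
  rw [(hasFDerivAt_sep f g f' g' hf hg x).fderiv]
  simp [Pi.single_apply]

lemma sep_lap (f g f' g' f'' g'' : ℝ → ℝ)
    (hf : ∀ s, HasDerivAt f (f' s) s) (hf' : ∀ s, HasDerivAt f' (f'' s) s)
    (hg : ∀ s, HasDerivAt g (g' s) s) (hg' : ∀ s, HasDerivAt g' (g'' s) s)
    (x : Fin 2 → ℝ) :
    lap (fun y : Fin 2 → ℝ => f (y 0) * g (y 1)) x
      = f'' (x 0) * g (x 1) + f (x 0) * g'' (x 1) := by
  unfold lap
  rw [Fin.sum_univ_two]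
  have e0 : (fun y : Fin 2 → ℝ =>
      fderiv ℝ (fun y : Fin 2 → ℝ => f (y 0) * g (y 1)) y (Pi.single 0 1))
      = fun y : Fin 2 → ℝ => f' (y 0) * g (y 1) :=
    funext fun y => sep_fd0 f g f' g' hf hg y
  have e1 : (fun y : Fin 2 → ℝ =>
      fderiv ℝ (fun y : Fin 2 → ℝ => f (y 0) * g (y 1)) y (Pi.single 1 1))
      = fun y : Fin 2 → ℝ => f (y 0) * g' (y 1) :=
    funext fun y => sep_fd1 f g f' g' hf hg y
  rw [e0, e1, sep_fd0 f' g f'' g' hf' hg x, sep_fd1 f g' f' g'' hf hg' x]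
lemma EMHcos (c : ℝ) (s : ℝ) :
    HasDerivAt (fun r => c * Real.cos (π * r)) ((-(c*π)) * Real.sin (π * s)) s := by
  have h : HasDerivAt (fun r : ℝ => π * r) π s := by
    simpa using (hasDerivAt_id s).const_mul π
  have := h.cos.const_mul c
  refine this.congr_deriv ?_
  ring

lemma EMHsin (c : ℝ) (s : ℝ) :
    HasDerivAt (fun r => c * Real.sin (π * r)) ((c*π) * Real.cos (π * s)) s := by
  have h : HasDerivAt (fun r : ℝ => π * r) π s := by
    simpa using (hasDerivAt_id s).const_mul π
  have := h.sin.const_mul c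
  refine this.congr_deriv ?_
  ring

lemma EMHsinsq (c : ℝ) (s : ℝ) :
    HasDerivAt (fun r => c * Real.sin (π * r)^2)
      ((2*c*π) * (Real.sin (π * s) * Real.cos (π * s))) s := by
  have h : HasDerivAt (fun r : ℝ => Real.sin (π * r)) (π * Real.cos (π * s)) s := by
    simpa using EMHsin 1 s
  have := (h.pow 2).const_mul c
  refine this.congr_deriv ?_
  push_cast
  ring

lemma EMHone : ∀ s : ℝ, HasDerivAt (fun _ : ℝ => (1:ℝ)) ((fun _ : ℝ => (0:ℝ)) s) s :=
  fun s => hasDerivAt_const s 1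

lemma fd0_cs (a b : ℝ) (x : Fin 2 → ℝ) :
    fderiv ℝ (fun y : Fin 2 → ℝ => a * Real.cos (π * y 0) * (b * Real.sin (π * y 1))) x
      (Pi.single 0 1)
    = (-(a*π)) * Real.sin (π * x 0) * (b * Real.sin (π * x 1)) :=
  sep_fd0 _ _ _ _ (EMHcos a) (EMHsin b) x

lemma fd1_cs (a b : ℝ) (x : Fin 2 → ℝ) :
    fderiv ℝ (fun y : Fin 2 → ℝ => a * Real.cos (π * y 0) * (b * Real.sin (π * y 1))) x
      (Pi.single 1 1)
    = a * Real.cos (π * x 0) * ((b*π) * Real.cos (π * x 1)) :=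
  sep_fd1 _ _ _ _ (EMHcos a) (EMHsin b) x

lemma fd0_sc (a b : ℝ) (x : Fin 2 → ℝ) :
    fderiv ℝ (fun y : Fin 2 → ℝ => a * Real.sin (π * y 0) * (b * Real.cos (π * y 1))) x
      (Pi.single 0 1)
    = (a*π) * Real.cos (π * x 0) * (b * Real.cos (π * x 1)) :=
  sep_fd0 _ _ _ _ (EMHsin a) (EMHcos b) x

lemma fd1_sc (a b : ℝ) (x : Fin 2 → ℝ) :
    fderiv ℝ (fun y : Fin 2 → ℝ => a * Real.sin (π * y 0) * (b * Real.cos (π * y 1))) x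
      (Pi.single 1 1)
    = a * Real.sin (π * x 0) * ((-(b*π)) * Real.sin (π * x 1)) :=
  sep_fd1 _ _ _ _ (EMHsin a) (EMHcos b) x

lemma lap_cs (a b : ℝ) (x : Fin 2 → ℝ) :
    lap (fun y : Fin 2 → ℝ => a * Real.cos (π * y 0) * (b * Real.sin (π * y 1))) x
    = ((-(a*π))*π) * Real.cos (π * x 0) * (b * Real.sin (π * x 1))
      + a * Real.cos (π * x 0) * ((-((b*π)*π)) * Real.sin (π * x 1)) := by
  have h := sep_lap (fun r => a * Real.cos (π * r)) (fun r => b * Real.sin (π * r))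
    (fun r => (-(a*π)) * Real.sin (π * r)) (fun r => (b*π) * Real.cos (π * r))
    (fun r => ((-(a*π))*π) * Real.cos (π * r)) (fun r => (-((b*π)*π)) * Real.sin (π * r))
    (EMHcos a) (fun s => EMHsin (-(a*π)) s) (EMHsin b) (fun s => EMHcos (b*π) s) x
  exact h

lemma lap_sc (a b : ℝ) (x : Fin 2 → ℝ) :
    lap (fun y : Fin 2 → ℝ => a * Real.sin (π * y 0) * (b * Real.cos (π * y 1))) x
    = (-((a*π)*π)) * Real.sin (π * x 0) * (b * Real.cos (π * x 1))
      + a * Real.sin (π * x 0) * (((-(b*π))*π) * Real.cos (π * x 1)) := by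
  have h := sep_lap (fun r => a * Real.sin (π * r)) (fun r => b * Real.cos (π * r))
    (fun r => (a*π) * Real.cos (π * r)) (fun r => (-(b*π)) * Real.sin (π * r))
    (fun r => (-((a*π)*π)) * Real.sin (π * r)) (fun r => ((-(b*π))*π) * Real.cos (π * r))
    (EMHsin a) (fun s => EMHcos (a*π) s) (EMHcos b) (fun s => EMHsin (-(b*π)) s) x
  exact h

lemma fdP0 (C : ℝ) (x : Fin 2 → ℝ) :
    fderiv ℝ (fun y : Fin 2 → ℝ =>
        C * Real.sin (π * y 0)^2 * 1 + 1 * (C * Real.sin (π * y 1)^2)) x (Pi.single 0 1)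
    = (2*C*π) * (Real.sin (π * x 0) * Real.cos (π * x 0)) := by
  have h := ((hasFDerivAt_sep (fun r => C * Real.sin (π * r)^2) (fun _ => (1:ℝ))
      (fun s => (2*C*π) * (Real.sin (π * s) * Real.cos (π * s))) (fun _ => (0:ℝ))
      (EMHsinsq C) EMHone x).add
    (hasFDerivAt_sep (fun _ => (1:ℝ)) (fun r => C * Real.sin (π * r)^2)
      (fun _ => (0:ℝ)) (fun s => (2*C*π) * (Real.sin (π * s) * Real.cos (π * s)))
      EMHone (EMHsinsq C) x)).fderiv
  simp only [Pi.add_def] at h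
  rw [h]
  simp [Pi.single_apply]

lemma fdP1 (C : ℝ) (x : Fin 2 → ℝ) :
    fderiv ℝ (fun y : Fin 2 → ℝ =>
        C * Real.sin (π * y 0)^2 * 1 + 1 * (C * Real.sin (π * y 1)^2)) x (Pi.single 1 1)
    = (2*C*π) * (Real.sin (π * x 1) * Real.cos (π * x 1)) := by
  have h := ((hasFDerivAt_sep (fun r => C * Real.sin (π * r)^2) (fun _ => (1:ℝ))
      (fun s => (2*C*π) * (Real.sin (π * s) * Real.cos (π * s))) (fun _ => (0:ℝ))
      (EMHsinsq C) EMHone x).add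
    (hasFDerivAt_sep (fun _ => (1:ℝ)) (fun r => C * Real.sin (π * r)^2)
      (fun _ => (0:ℝ)) (fun s => (2*C*π) * (Real.sin (π * s) * Real.cos (π * s)))
      EMHone (EMHsinsq C) x)).fderiv
  simp only [Pi.add_def] at h
  rw [h]
  simp [Pi.single_apply]

end Helpers

/-- The pair `(u, w)` with `u = (1+2π²α²)w` solves the EMAC-Reg system
`u_t + (w·∇)w + ∇p − νΔu = 0`, `−α²Δw + w = u`, `div w = 0` on `Ω = (0,1)²`,
with pressure defined via `∇p = −(w·∇)w`. -/
theorem stmt10 (α ν : ℝ) (hα : 0 ≤ α) (hν : 0 < ν) :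
    ∃ p : ℝ → (Fin 2 → ℝ) → ℝ,
      (∀ t, ContDiff ℝ 1 (p t)) ∧
      (∀ t, ∀ x ∈ (Set.Ioo (0:ℝ) 1) ×ˢ (Set.Ioo (0:ℝ) 1),
        ∀ i : Fin 2,
          (deriv (fun s => uTG α ν s ![x.1, x.2] i) t
            + ∑ j, wTG ν t ![x.1, x.2] j * gradEntry (wTG ν t) i j ![x.1, x.2]
            + fderiv ℝ (p t) ![x.1, x.2] (Pi.single i 1)
            - ν * lap (fun y => uTG α ν t y i) ![x.1, x.2] = 0) ∧
          (-α^2 * lap (fun y => wTG ν t y i) ![x.1, x.2] + wTG ν t ![x.1, x.2] i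
            = uTG α ν t ![x.1, x.2] i)) ∧
      (∀ t, ∀ x ∈ (Set.Ioo (0:ℝ) 1) ×ˢ (Set.Ioo (0:ℝ) 1),
        divg (wTG ν t) ![x.1, x.2] = 0) := by
  refine ⟨fun t x => Real.exp (-2*π^2*ν*t)^2/2 * Real.sin (π * x 0)^2 * 1
      + 1 * (Real.exp (-2*π^2*ν*t)^2/2 * Real.sin (π * x 1)^2), ?_, ?_, ?_⟩
  · intro t
    have h0 : ContDiff ℝ 1 (fun y : Fin 2 → ℝ => y 0) := contDiff_pi.mp contDiff_id 0
    have h1 : ContDiff ℝ 1 (fun y : Fin 2 → ℝ => y 1) := contDiff_pi.mp contDiff_id 1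
    have hs0 : ContDiff ℝ 1 (fun y : Fin 2 → ℝ => Real.sin (π * y 0)) :=
      Real.contDiff_sin.comp (contDiff_const.mul h0)
    have hs1 : ContDiff ℝ 1 (fun y : Fin 2 → ℝ => Real.sin (π * y 1)) :=
      Real.contDiff_sin.comp (contDiff_const.mul h1)
    exact ((contDiff_const.mul (hs0.pow 2)).mul contDiff_const).add
      (contDiff_const.mul (contDiff_const.mul (hs1.pow 2)))
  · intro t x hx i
    have ew0 : (fun y : Fin 2 → ℝ => wTG ν t y 0)
        = fun y : Fin 2 → ℝ => -Real.exp (-2*π^2*ν*t) * Real.cos (π * y 0)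
            * ((1:ℝ) * Real.sin (π * y 1)) := by
      funext y; simp [wTG]; ring
    have ew1 : (fun y : Fin 2 → ℝ => wTG ν t y 1)
        = fun y : Fin 2 → ℝ => Real.exp (-2*π^2*ν*t) * Real.sin (π * y 0)
            * ((1:ℝ) * Real.cos (π * y 1)) := by
      funext y; simp [wTG]; ring
    have eu0 : (fun y : Fin 2 → ℝ => uTG α ν t y 0)
        = fun y : Fin 2 → ℝ => -((1+2*π^2*α^2) * Real.exp (-2*π^2*ν*t)) * Real.cos (π * y 0)
            * ((1:ℝ) * Real.sin (π * y 1)) := by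
      funext y; simp [uTG, wTG]; ring
    have eu1 : (fun y : Fin 2 → ℝ => uTG α ν t y 1)
        = fun y : Fin 2 → ℝ => ((1+2*π^2*α^2) * Real.exp (-2*π^2*ν*t)) * Real.sin (π * y 0)
            * ((1:ℝ) * Real.cos (π * y 1)) := by
      funext y; simp [uTG, wTG]; ring
    have ev0 : wTG ν t ![x.1, x.2] 0
        = -Real.exp (-2*π^2*ν*t) * Real.cos (π * x.1) * Real.sin (π * x.2) := by
      simp [wTG]; ring
    have ev1 : wTG ν t ![x.1, x.2] 1
        = Real.exp (-2*π^2*ν*t) * Real.sin (π * x.1) * Real.cos (π * x.2) := by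
      simp [wTG]; ring
    have hlin : HasDerivAt (fun s : ℝ => -2*π^2*ν*s) (-2*π^2*ν) t := by
      have h := HasDerivAt.const_mul (-2*π^2*ν) (hasDerivAt_id t)
      rw [mul_one] at h
      exact h
    fin_cases i
    · simp only [Fin.mk_zero, Fin.mk_one]
      constructor
      · have hB : (fun s => uTG α ν s ![x.1, x.2] 0)
            = fun s => ((1+2*π^2*α^2) * (-(Real.cos (π * x.1)) * Real.sin (π * x.2)))
                * Real.exp (-2*π^2*ν*s) := by
          funext s
          simp only [uTG, wTG, Matrix.cons_val_zero, Matrix.cons_val_one, Matrix.head_cons]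
          ring
        have hdd := (hlin.exp).const_mul
          ((1+2*π^2*α^2) * (-(Real.cos (π * x.1)) * Real.sin (π * x.2)))
        rw [Fin.sum_univ_two]
        simp only [gradEntry]
        rw [hB, hdd.deriv, ew0,
          fd0_cs (-Real.exp (-2*π^2*ν*t)) 1 ![x.1, x.2],
          fd1_cs (-Real.exp (-2*π^2*ν*t)) 1 ![x.1, x.2],
          ev0, ev1, eu0,
          lap_cs (-((1+2*π^2*α^2) * Real.exp (-2*π^2*ν*t))) 1 ![x.1, x.2]]
        beta_reduce
        rw [fdP0 (Real.exp (-2*π^2*ν*t)^2/2) ![x.1, x.2]]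
        simp only [Matrix.cons_val_zero, Matrix.cons_val_one, Matrix.head_cons]
        linear_combination (-(Real.exp (-2*π^2*ν*t)^2 * π * Real.sin (π * x.1)
          * Real.cos (π * x.1))) * Real.sin_sq_add_cos_sq (π * x.2)
      · rw [ew0, lap_cs (-Real.exp (-2*π^2*ν*t)) 1 ![x.1, x.2], ev0]
        have evu0 : uTG α ν t ![x.1, x.2] 0
            = (1+2*π^2*α^2) * (-Real.exp (-2*π^2*ν*t) * Real.cos (π * x.1)
                * Real.sin (π * x.2)) := by
          simp only [uTG, wTG, Matrix.cons_val_zero, Matrix.cons_val_one, Matrix.head_cons]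
          ring
        rw [evu0]
        simp only [Matrix.cons_val_zero, Matrix.cons_val_one, Matrix.head_cons]
        ring
    · simp only [Fin.mk_zero, Fin.mk_one]
      constructor
      · have hB : (fun s => uTG α ν s ![x.1, x.2] 1)
            = fun s => ((1+2*π^2*α^2) * (Real.sin (π * x.1) * Real.cos (π * x.2)))
                * Real.exp (-2*π^2*ν*s) := by
          funext s
          simp only [uTG, wTG, Matrix.cons_val_zero, Matrix.cons_val_one, Matrix.head_cons]
          ring
        have hdd := (hlin.exp).const_mul
          ((1+2*π^2*α^2) * (Real.sin (π * x.1) * Real.cos (π * x.2)))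
        rw [Fin.sum_univ_two]
        simp only [gradEntry]
        rw [hB, hdd.deriv, ew1,
          fd0_sc (Real.exp (-2*π^2*ν*t)) 1 ![x.1, x.2],
          fd1_sc (Real.exp (-2*π^2*ν*t)) 1 ![x.1, x.2],
          ev0, ev1, eu1,
          lap_sc ((1+2*π^2*α^2) * Real.exp (-2*π^2*ν*t)) 1 ![x.1, x.2]]
        beta_reduce
        rw [fdP1 (Real.exp (-2*π^2*ν*t)^2/2) ![x.1, x.2]]
        simp only [Matrix.cons_val_zero, Matrix.cons_val_one, Matrix.head_cons]
        linear_combination (-(Real.exp (-2*π^2*ν*t)^2 * π * Real.sin (π * x.2)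
          * Real.cos (π * x.2))) * Real.sin_sq_add_cos_sq (π * x.1)
      · rw [ew1, lap_sc (Real.exp (-2*π^2*ν*t)) 1 ![x.1, x.2], ev1]
        have evu1 : uTG α ν t ![x.1, x.2] 1
            = (1+2*π^2*α^2) * (Real.exp (-2*π^2*ν*t) * Real.sin (π * x.1)
                * Real.cos (π * x.2)) := by
          simp only [uTG, wTG, Matrix.cons_val_zero, Matrix.cons_val_one, Matrix.head_cons]
          ring
        rw [evu1]
        simp only [Matrix.cons_val_zero, Matrix.cons_val_one, Matrix.head_cons]
        ring
  · intro t x hx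
    have ew0 : (fun y : Fin 2 → ℝ => wTG ν t y 0)
        = fun y : Fin 2 → ℝ => -Real.exp (-2*π^2*ν*t) * Real.cos (π * y 0)
            * ((1:ℝ) * Real.sin (π * y 1)) := by
      funext y; simp [wTG]; ring
    have ew1 : (fun y : Fin 2 → ℝ => wTG ν t y 1)
        = fun y : Fin 2 → ℝ => Real.exp (-2*π^2*ν*t) * Real.sin (π * y 0)
            * ((1:ℝ) * Real.cos (π * y 1)) := by
      funext y; simp [wTG]; ring
    unfold divg
    rw [Fin.sum_univ_two]
    simp only [gradEntry]
    rw [ew0, ew1,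
      fd0_cs (-Real.exp (-2*π^2*ν*t)) 1 ![x.1, x.2],
      fd1_sc (Real.exp (-2*π^2*ν*t)) 1 ![x.1, x.2]]
    ring
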